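/- For any w > 0, the level set h_w⁻¹(−1/4) = {(0, −1/2)}, where h_w(x,y) = y/√(1+w²x²) + x² + y². -/
import Mathlib


open Real

/-- The level set `h_w⁻¹(−1/4)` is the single point `(0, −1/2)`. -/
theorem hw_level_min (w : ℝ) (hw : 0 < w) :
    {p : ℝ × ℝ |
        p.2 / Real.sqrt (1 + w ^ 2 * p.1 ^ 2) + p.1 ^ 2 + p.2 ^ 2 = -(1 / 4)}
      = {((0 : ℝ), (-(1 / 2) : ℝ))} := by
  ext ⟨x, y⟩
  simp only [Set.mem_setOf_eq, Set.mem_singleton_iff, Prod.mk.injEq]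
  constructor
  · intro h
    set s := Real.sqrt (1 + w ^ 2 * x ^ 2) with hs_def
    have h1 : (0:ℝ) ≤ 1 + w ^ 2 * x ^ 2 := by positivity
    have hs1 : 1 ≤ s := by
      rw [hs_def, show (1:ℝ) + w ^ 2 * x ^ 2 = 1 + (w*x)^2 by ring]
      nlinarith [Real.sq_sqrt (show (0:ℝ) ≤ 1 + (w*x)^2 by positivity),
        Real.sqrt_nonneg (1 + (w*x)^2), sq_nonneg (w*x),
        sq_nonneg (Real.sqrt (1 + (w*x)^2) - 1)]
    have hs0 : 0 < s := by linarith
    have hsq : s ^ 2 = 1 + w ^ 2 * x ^ 2 := Real.sq_sqrt h1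
    have h2 : y + (x ^ 2 + y ^ 2 + 1/4) * s = 0 := by
      field_simp at h; nlinarith [h]
    have h3 : y * s + (x ^ 2 + y ^ 2 + 1/4) * s ^ 2 = 0 := by nlinarith [mul_eq_zero_of_left h2 s]
    have hx2 : x ^ 2 = 0 := by
      nlinarith [sq_nonneg (y * s + 1/2), sq_nonneg (x * s), sq_nonneg (x * x * w), sq_nonneg x]
    have hx : x = 0 := by nlinarith [sq_nonneg x]
    refine ⟨hx, ?_⟩
    have hs : s = 1 := by rw [hs_def, hx]; simp
    rw [hx, hs] at h2
    nlinarith [sq_nonneg (y + 1/2)]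
  · rintro ⟨hx, hy⟩
    subst hx; subst hy
    simp [Real.sqrt_one]
    norm_num
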